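/- In the special case λ = 0: if A = P is an orthogonal projection onto a subspace V, and U is unitary with ‖P U v‖ ≤ d‖v‖ for all v ∈ V where 0 ≤ d < 1, then ‖(UP)² v‖ ≤ d ‖v‖ for all v, and hence the spectral radius of UP is at most √d < 1. -/

import Mathlib

/-- Special case `λ = 0`: if `P` is the orthogonal projection onto a subspace
`V` of a finite-dimensional Hilbert space and `U` is unitary with
`‖P(Uv)‖ ≤ d‖v‖` for all `v ∈ V`, `0 ≤ d < 1`, then `‖(UP)² v‖ ≤ d‖v‖` for all
`v`, and the spectral radius of `UP` is at most `√d < 1`. -/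
theorem stmt_13 {E : Type*} [NormedAddCommGroup E] [InnerProductSpace ℂ E]
    [FiniteDimensional ℂ E]
    (V : Submodule ℂ E) (P : E →L[ℂ] E)
    (hP : P = V.subtypeL ∘L V.orthogonalProjectionOnto)
    (U : E →L[ℂ] E) (hU : U ∈ unitary (E →L[ℂ] E))
    (d : ℝ) (hd0 : 0 ≤ d) (hd1 : d < 1)
    (hcontr : ∀ v ∈ V, ‖P (U v)‖ ≤ d * ‖v‖) :
    (∀ v : E, ‖((U * P) ^ 2) v‖ ≤ d * ‖v‖) ∧
      Real.sqrt d < 1 ∧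
      spectralRadius ℂ (U * P) ≤ ENNReal.ofReal (Real.sqrt d) := by
  have hPmem : ∀ v : E, P v ∈ V := by
    intro v; rw [hP]; exact (V.orthogonalProjectionOnto v).2
  have hPnorm : ∀ v : E, ‖P v‖ ≤ ‖v‖ := by
    intro v
    rw [hP]
    calc ‖(V.subtypeL ∘L V.orthogonalProjectionOnto) v‖ = ‖V.orthogonalProjectionOnto v‖ := rfl
      _ ≤ 1 * ‖v‖ := (V.orthogonalProjectionOnto).le_of_opNorm_le
          (Submodule.orthogonalProjectionOnto_norm_le V) v
      _ = ‖v‖ := one_mul _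
  have hUnorm : ∀ v : E, ‖U v‖ = ‖v‖ := fun v => U.norm_map_of_mem_unitary hU v
  have key : ∀ v : E, ‖((U * P) ^ 2) v‖ ≤ d * ‖v‖ := by
    intro v
    have : ((U * P) ^ 2) v = U (P (U (P v))) := by
      simp [pow_two, ContinuousLinearMap.mul_apply]
    rw [this, hUnorm]
    calc ‖P (U (P v))‖ ≤ d * ‖P v‖ := hcontr _ (hPmem v)
      _ ≤ d * ‖v‖ := by nlinarith [hPnorm v]
  refine ⟨key, ?_, ?_⟩
  · rw [show (1 : ℝ) = Real.sqrt 1 by simp]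
    exact Real.sqrt_lt_sqrt hd0 hd1
  · have hop : ‖(U * P) ^ 2‖ ≤ d :=
      ContinuousLinearMap.opNorm_le_bound _ hd0 key
    have h1 : ‖(1 : E →L[ℂ] E)‖ ≤ 1 := by
      rw [ContinuousLinearMap.one_def]; exact ContinuousLinearMap.norm_id_le
    have e1 : (‖(U * P) ^ (1 + 1)‖₊ : ENNReal) ≤ ENNReal.ofReal d := by
      rw [← ENNReal.ofReal_coe_nnreal]
      exact ENNReal.ofReal_le_ofReal (by rw [coe_nnnorm]; exact hop)
    have e2 : (‖(1 : E →L[ℂ] E)‖₊ : ENNReal) ≤ 1 := by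
      rw [← ENNReal.coe_one, ENNReal.coe_le_coe, ← NNReal.coe_le_coe]
      exact h1
    refine (spectrum.spectralRadius_le_pow_nnnorm_pow_one_div ℂ (U * P) 1).trans ?_
    calc (‖(U * P) ^ (1 + 1)‖₊ : ENNReal) ^ (1 / ((1 : ℕ) + 1) : ℝ) *
          (‖(1 : E →L[ℂ] E)‖₊ : ENNReal) ^ (1 / ((1 : ℕ) + 1) : ℝ)
        ≤ (ENNReal.ofReal d) ^ (1 / ((1 : ℕ) + 1) : ℝ) * 1 ^ (1 / ((1 : ℕ) + 1) : ℝ) := by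
          gcongr
      _ = ENNReal.ofReal (Real.sqrt d) := by
          rw [ENNReal.one_rpow, mul_one,
            ENNReal.ofReal_rpow_of_nonneg hd0 (by norm_num), Real.sqrt_eq_rpow]
          norm_num
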